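/- Let R be a commutative noetherian ring, M a finitely generated R-module, and n ≥ 0 an integer. If M can be embedded in a finitely generated R-module of projective dimension at most n (i.e., there is an injective R-homomorphism M → W with pd_R W ≤ n), then the n-th syzygy Ω^n M is an (n+1)st syzygy; that is, there exist a finitely generated R-module N and an exact sequence 0 → Ω^n M → Q_n → Q_{n-1} → ⋯ → Q_0 → N → 0 with each Q_i finitely generated projective. -/

import Mathlib

/-! Preamble: syzygies, transposes, torsionfreeness, projective/injective dimension,
Ext and Tor for finitely generated modules over a commutative noetherian ring. -/

open CategoryTheory

noncomputable section

universe u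

variable (R : Type u) [CommRing R]

/-- The `i`-th Ext module `Ext^i_R(X, Y)` as an object of `ModuleCat R`. -/
abbrev ExtMod (i : ℕ) (X Y : ModuleCat.{u} R) : ModuleCat.{u} R :=
  ((Ext R (ModuleCat.{u} R) i).obj (Opposite.op X)).obj Y

/-- The `i`-th Tor module `Tor^R_i(X, Y)` as an object of `ModuleCat R`. -/
abbrev TorMod (i : ℕ) (X Y : ModuleCat.{u} R) : ModuleCat.{u} R :=
  ((Tor (ModuleCat.{u} R) i).obj X).obj Y

/-- `0 → A → B → C → 0` is a short exact sequence. -/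
def IsSES {A B C : ModuleCat.{u} R} (f : A ⟶ B) (g : B ⟶ C) : Prop :=
  Function.Injective f ∧ Function.Surjective g ∧ LinearMap.range f.hom = LinearMap.ker g.hom

/-- A finitely generated projective module object. -/
def IsFGProj (P : ModuleCat.{u} R) : Prop :=
  Module.Finite R P ∧ Module.Projective R P

/-- `IsSyzygyOf R n M K` : `K` is an `n`-th syzygy of `M`, i.e. there is an exact sequence
`0 → K → P_{n-1} → ⋯ → P_0 → M → 0` with all `P_i` finitely generated projective. -/
inductive IsSyzygyOf : ℕ → ModuleCat.{u} R → ModuleCat.{u} R → Prop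
  | zero (M K : ModuleCat.{u} R) (e : K ≃ₗ[R] M) : IsSyzygyOf 0 M K
  | succ (n : ℕ) (M K K' P : ModuleCat.{u} R) (hP : IsFGProj R P)
      (f : K ⟶ P) (g : P ⟶ K') (hses : IsSES R f g)
      (h : IsSyzygyOf n M K') : IsSyzygyOf (n + 1) M K

/-- `IsTranspose R M T` : `T` is an (Auslander) transpose of `M`, i.e. there is a projective
presentation `P₁ →d P₀ → M → 0` by finitely generated projectives such that
`T ≅ Coker (d* : Hom(P₀,R) → Hom(P₁,R))`. -/
def IsTranspose (M T : ModuleCat.{u} R) : Prop :=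
  ∃ (P₀ P₁ : ModuleCat.{u} R) (d : P₁ ⟶ P₀) (π : P₀ ⟶ M),
    IsFGProj R P₀ ∧ IsFGProj R P₁ ∧ Function.Surjective π ∧
    LinearMap.range d.hom = LinearMap.ker π.hom ∧
    Nonempty (T ≃ₗ[R]
      (Module.Dual R P₁ ⧸ LinearMap.range (LinearMap.dualMap (d.hom : P₁ →ₗ[R] P₀))))

/-- A module `X` is `m`-torsionfree if `Ext^i_R(Tr X, R) = 0` for `1 ≤ i ≤ m`
(this does not depend on the choice of the transpose `Tr X`). -/
def IsTorsionfree (m : ℕ) (X : ModuleCat.{u} R) : Prop :=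
  ∀ T : ModuleCat.{u} R, IsTranspose R X T →
    ∀ i : ℕ, 1 ≤ i → i ≤ m → Subsingleton (ExtMod R i T (ModuleCat.of R R))

/-- `HasPdLE R n W` : `W` admits a projective resolution
`0 → P_n → ⋯ → P_0 → W → 0` by finitely generated projectives,
i.e. (for finitely generated `W`) `W` has projective dimension at most `n`. -/
inductive HasPdLE : ℕ → ModuleCat.{u} R → Prop
  | zero (W : ModuleCat.{u} R) (h : Module.Projective R W) : HasPdLE 0 W
  | succ (n : ℕ) (W K P : ModuleCat.{u} R) (hP : IsFGProj R P)
      (f : K ⟶ P) (g : P ⟶ W) (hses : IsSES R f g) (h : HasPdLE n K) : HasPdLE (n + 1) W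

/-- `HasIdLE R n W` : `W` admits an injective resolution of length `n`,
i.e. `W` has injective dimension at most `n`. -/
inductive HasIdLE : ℕ → ModuleCat.{u} R → Prop
  | zero (W : ModuleCat.{u} R) (h : Module.Injective R W) : HasIdLE 0 W
  | succ (n : ℕ) (W I C : ModuleCat.{u} R) (hI : Module.Injective R I)
      (f : W ⟶ I) (g : I ⟶ C) (hses : IsSES R f g) (h : HasIdLE n C) : HasIdLE (n + 1) W

/-- A local ring is Gorenstein if it has finite injective dimension over itself. -/
def IsGorenstein : Prop := ∃ n : ℕ, HasIdLE R n (ModuleCat.of R R)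

/-- A finitely generated module `G` is Gorenstein projective if
`Ext^i_R(G,R) = 0` and `Ext^i_R(Tr G,R) = 0` for all `i > 0`. -/
def IsGorensteinProj (G : ModuleCat.{u} R) : Prop :=
  Module.Finite R G ∧
  (∀ i : ℕ, 1 ≤ i → Subsingleton (ExtMod R i G (ModuleCat.of R R))) ∧
  ∀ T : ModuleCat.{u} R, IsTranspose R G T →
    ∀ i : ℕ, 1 ≤ i → Subsingleton (ExtMod R i T (ModuleCat.of R R))

/-- `HasGdimLE R n W` : there is an exact sequence `0 → G_n → ⋯ → G_0 → W → 0`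
with all `G_i` Gorenstein projective; in particular `W` has finite Gorenstein dimension. -/
inductive HasGdimLE : ℕ → ModuleCat.{u} R → Prop
  | zero (W G : ModuleCat.{u} R) (hG : IsGorensteinProj R G) (e : W ≃ₗ[R] G) : HasGdimLE 0 W
  | succ (n : ℕ) (W K G : ModuleCat.{u} R) (hG : IsGorensteinProj R G)
      (f : K ⟶ G) (g : G ⟶ W) (hses : IsSES R f g) (h : HasGdimLE n K) : HasGdimLE (n + 1) W

section LocalRing

variable [IsLocalRing R]

/-- The residue field `k` of a local ring `R`, as an object of `ModuleCat R`. -/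
abbrev ResFld : ModuleCat.{u} R := ModuleCat.of R (IsLocalRing.ResidueField R)

/-- `X` is a `k`-vector space of dimension `d` (as an `R`-module killed by the maximal ideal). -/
def IsKVecDim (X : Type u) [AddCommGroup X] [Module R X] (d : ℕ) : Prop :=
  Nonempty (X ≃ₗ[R] (Fin d → IsLocalRing.ResidueField R))

/-- The local ring `R` has depth `t`, via Rees' characterization
`depth R = inf { i | Ext^i_R(k, R) ≠ 0 }`. -/
def HasDepth (t : ℕ) : Prop :=
  (∀ i : ℕ, i < t → Subsingleton (ExtMod R i (ResFld R) (ModuleCat.of R R))) ∧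
    ¬ Subsingleton (ExtMod R t (ResFld R) (ModuleCat.of R R))

/-- `depth_R M ≥ t`, via Rees' characterization of depth by vanishing of `Ext^i_R(k, M)`. -/
def DepthGE (M : ModuleCat.{u} R) (t : ℕ) : Prop :=
  ∀ i : ℕ, i < t → Subsingleton (ExtMod R i (ResFld R) M)

end LocalRing



section Aux

variable {R}

/-- Syzygy chains peeled from the module end. -/
inductive CoSyz : ℕ → ModuleCat.{u} R → ModuleCat.{u} R → Prop
  | zero (M K : ModuleCat.{u} R) (e : K ≃ₗ[R] M) : CoSyz 0 M K
  | succ (n : ℕ) (M K B P : ModuleCat.{u} R) (hP : IsFGProj R P)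
      (f : B ⟶ P) (g : P ⟶ M) (hses : IsSES R f g)
      (h : CoSyz n B K) : CoSyz (n + 1) M K

lemma range_comp_equiv {M K Q : Type u} [AddCommGroup M] [AddCommGroup K] [AddCommGroup Q]
    [Module R M] [Module R K] [Module R Q] (a : M →ₗ[R] Q) (e : K ≃ₗ[R] M) :
    LinearMap.range (a ∘ₗ e.toLinearMap) = LinearMap.range a := by
  ext q
  simp only [LinearMap.mem_range, LinearMap.coe_comp, Function.comp_apply]
  constructor
  · rintro ⟨k, hk⟩; exact ⟨e k, hk⟩
  · rintro ⟨m, hm⟩; exact ⟨e.symm m, by simpa using hm⟩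

lemma ker_equiv_comp {P K M : Type u} [AddCommGroup P] [AddCommGroup K] [AddCommGroup M]
    [Module R P] [Module R K] [Module R M] (v : P →ₗ[R] K) (e : K ≃ₗ[R] M) :
    LinearMap.ker (e.toLinearMap ∘ₗ v) = LinearMap.ker v := by
  ext p
  simp only [LinearMap.mem_ker, LinearMap.coe_comp, Function.comp_apply]
  constructor
  · intro h; have := congrArg e.symm h; simpa using this
  · intro h; rw [h]; simp

lemma syz_congr {m : ℕ} {N K N' : ModuleCat.{u} R}
    (h : IsSyzygyOf R m N K) (e : N ≃ₗ[R] N') : IsSyzygyOf R m N' K := by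
  induction h generalizing N' with
  | zero M K e0 => exact .zero _ _ (e0.trans e)
  | succ n M K K' P hP u v hses h ih => exact .succ n N' K K' P hP u v hses (ih e)

lemma syz_extend {Q C : ModuleCat.{u} R} (hQ : IsFGProj R Q)
    {m : ℕ} {E K : ModuleCat.{u} R} (h : IsSyzygyOf R m E K) :
    ∀ (a : E ⟶ Q) (b : Q ⟶ C), IsSES R a b → IsSyzygyOf R (m + 1) C K := by
  induction h with
  | zero M K e =>
    intro a b hab
    refine .succ 0 C K C Q hQ (ModuleCat.ofHom (a.hom ∘ₗ e.toLinearMap)) b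
      ⟨hab.1.comp e.injective, hab.2.1, ?_⟩ (.zero C C (LinearEquiv.refl R C))
    rw [ModuleCat.hom_ofHom, range_comp_equiv]
    exact hab.2.2
  | succ n M K K' P hP u v hses h ih =>
    intro a b hab
    exact .succ (n + 1) C K K' P hP u v hses (ih a b hab)

lemma cosyz_prepend {n : ℕ} {M K'' : ModuleCat.{u} R} (h : CoSyz n M K'')
    {K P : ModuleCat.{u} R} (hP : IsFGProj R P) (u : K ⟶ P) :
    ∀ v : P ⟶ K'', IsSES R u v → CoSyz (n + 1) M K := by
  induction h with
  | zero M K0 e =>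
    intro v huv
    refine .succ 0 M K K P hP u (ModuleCat.ofHom (e.toLinearMap ∘ₗ v.hom))
      ⟨huv.1, e.surjective.comp huv.2.1, ?_⟩ (.zero K K (LinearEquiv.refl R K))
    rw [ModuleCat.hom_ofHom, ker_equiv_comp]
    exact huv.2.2
  | succ n M K0 B P1 hP1 u1 v1 hses1 h ih =>
    intro v huv
    exact .succ (n + 1) M K B P1 hP1 u1 v1 hses1 (ih v huv)

lemma syz_to_cosyz {n : ℕ} {M K : ModuleCat.{u} R} (h : IsSyzygyOf R n M K) :
    CoSyz n M K := by
  induction h with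
  | zero M K e => exact .zero M K e
  | succ n M K K' P hP u v hses h ih => exact cosyz_prepend ih hP u v hses

lemma hasPdLE_congr {n : ℕ} {W W' : ModuleCat.{u} R}
    (h : HasPdLE R n W) (e : W ≃ₗ[R] W') : HasPdLE R n W' := by
  cases h with
  | zero _ hp =>
    haveI := hp
    exact .zero W' (Module.Projective.of_split e.symm.toLinearMap e.toLinearMap
      (by ext x; simp))
  | succ n _ L P hP u v hses h =>
    refine .succ n W' L P hP u (ModuleCat.ofHom (e.toLinearMap ∘ₗ v.hom))
      ⟨hses.1, e.surjective.comp hses.2.1, ?_⟩ h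
    rw [ModuleCat.hom_ofHom, ker_equiv_comp]
    exact hses.2.2

lemma hasPdLE_prod {n : ℕ} {L : ModuleCat.{u} R} (h : HasPdLE R n L)
    (P : ModuleCat.{u} R) (hP : IsFGProj R P) :
    HasPdLE R n (ModuleCat.of R (↥L × ↥P)) := by
  cases h with
  | zero _ hp =>
    haveI := hp; haveI := hP.2
    exact .zero _ (inferInstance : Module.Projective R (↥L × ↥P))
  | succ n _ Kk Pp hPp u v hses h =>
    haveI := hPp.1; haveI := hP.1; haveI := hPp.2; haveI := hP.2
    refine .succ n _ Kk (ModuleCat.of R (↥Pp × ↥P))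
      ⟨(inferInstance : Module.Finite R (↥Pp × ↥P)),
       (inferInstance : Module.Projective R (↥Pp × ↥P))⟩
      (ModuleCat.ofHom (LinearMap.prod u.hom 0))
      (ModuleCat.ofHom (LinearMap.prodMap v.hom LinearMap.id)) ⟨?_, ?_, ?_⟩ h
    · intro x y hxy
      exact hses.1 (congrArg Prod.fst hxy)
    · rintro ⟨a, b⟩
      obtain ⟨p, hp⟩ := hses.2.1 a
      exact ⟨(p, b), Prod.ext hp rfl⟩
    · ext z
      simp only [ModuleCat.hom_ofHom, LinearMap.mem_range, LinearMap.mem_ker]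
      constructor
      · rintro ⟨y, hy⟩
        rw [← hy]
        have h1 : v (u y) = 0 := by
          rw [← LinearMap.mem_ker, ← hses.2.2]
          exact LinearMap.mem_range_self _ y
        exact Prod.ext h1 rfl
      · intro hx
        have hx1 : v z.1 = 0 := congrArg Prod.fst hx
        have hx2 : z.2 = 0 := congrArg Prod.snd hx
        have h1 : z.1 ∈ LinearMap.ker v.hom := by
          rw [LinearMap.mem_ker]; exact hx1
        rw [← hses.2.2] at h1
        obtain ⟨y, hy⟩ := h1
        exact ⟨y, Prod.ext hy hx2.symm⟩

lemma hasPdLE_of_ses {n : ℕ} {L X P : ModuleCat.{u} R} (hL : HasPdLE R n L)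
    (hP : IsFGProj R P) (u : L ⟶ X) (v : X ⟶ P) (hses : IsSES R u v) :
    HasPdLE R n X := by
  haveI := hP.2
  obtain ⟨s, hs⟩ := Module.projective_lifting_property v.hom LinearMap.id hses.2.1
  set e0 : (↥L × ↥P) →ₗ[R] ↥X :=
    u.hom ∘ₗ LinearMap.fst R ↥L ↥P + s ∘ₗ LinearMap.snd R ↥L ↥P with he0def
  have he0 : ∀ z : ↥L × ↥P, e0 z = u z.1 + s z.2 := fun z => rfl
  have hvs : ∀ p : ↥P, v (s p) = p := fun p => LinearMap.congr_fun hs p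
  have hvu : ∀ l : ↥L, v (u l) = 0 := by
    intro l
    rw [← LinearMap.mem_ker, ← hses.2.2]
    exact LinearMap.mem_range_self _ l
  have hbij : Function.Bijective e0 := by
    constructor
    · intro z w hzw
      rw [he0, he0] at hzw
      have h2 : z.2 = w.2 := by
        have h3 := congrArg v hzw
        simpa [map_add, hvu, hvs] using h3
      have h1 : u z.1 = u w.1 := by
        rw [h2] at hzw
        exact add_right_cancel hzw
      exact Prod.ext (hses.1 h1) h2
    · intro x
      have h1 : v (x - s (v x)) = 0 := by rw [map_sub, hvs, sub_self]
      have h2 : x - s (v x) ∈ LinearMap.range u.hom := by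
        rw [hses.2.2, LinearMap.mem_ker]
        exact h1
      obtain ⟨l, hl⟩ := h2
      refine ⟨(l, v x), ?_⟩
      rw [he0, hl]
      simp
  exact hasPdLE_congr (hasPdLE_prod hL P hP) (LinearEquiv.ofBijective e0 hbij)

variable (R) [IsNoetherianRing R]

lemma main_aux : ∀ (n : ℕ) (W : ModuleCat.{u} R), Module.Finite R W → HasPdLE R n W →
    ∀ (A : ModuleCat.{u} R) (f : A ⟶ W), Function.Injective f →
    ∀ K : ModuleCat.{u} R, CoSyz n A K →
    IsSyzygyOf R (n + 1) (ModuleCat.of R (↥W ⧸ LinearMap.range f.hom)) K := by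
  intro n
  induction n with
  | zero =>
    intro W hWfin hpd A f hf K hK
    cases hpd with | zero _ hproj =>
    cases hK with | zero _ _ e =>
    refine .succ 0 _ K (ModuleCat.of R (↥W ⧸ LinearMap.range f.hom)) W
      ⟨hWfin, hproj⟩ (ModuleCat.ofHom (f.hom ∘ₗ e.toLinearMap))
      (ModuleCat.ofHom (LinearMap.range f.hom).mkQ)
      ⟨hf.comp e.injective, Submodule.mkQ_surjective _, ?_⟩
      (.zero _ _ (LinearEquiv.refl R (↥W ⧸ LinearMap.range f.hom)))
    rw [ModuleCat.hom_ofHom, ModuleCat.hom_ofHom, range_comp_equiv, Submodule.ker_mkQ]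
  | succ n IH =>
    intro W hWfin hpd A f hf K hK
    cases hpd with | succ _ _ L Q hQ fL σ hses1 hL =>
    cases hK with | succ _ _ _ B P hP ι π hses2 hB =>
    haveI := hP.1; haveI := hQ.1
    haveI : Module.Finite R (↥P × ↥Q) := inferInstance
    set h0 : (↥P × ↥Q) →ₗ[R] ↥W :=
      (f.hom ∘ₗ π.hom) ∘ₗ LinearMap.fst R ↥P ↥Q -
        σ.hom ∘ₗ LinearMap.snd R ↥P ↥Q with hh0
    set X : Submodule R (↥P × ↥Q) := LinearMap.ker h0 with hX
    have hmem : ∀ z : ↥P × ↥Q, z ∈ X ↔ f (π z.1) = σ z.2 := by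
      intro z
      rw [hX, LinearMap.mem_ker, hh0]
      simp [sub_eq_zero]
    haveI hXfin : Module.Finite R ↥X := inferInstance
    -- the kernel of the projection X → P is a copy of L
    have hσL : ∀ l : ↥L, σ (fL l) = 0 := by
      intro l
      rw [← LinearMap.mem_ker, ← hses1.2.2]
      exact LinearMap.mem_range_self _ l
    have hL0 : ∀ l : ↥L, (((0 : ↥P), fL l) ∈ X) := by
      intro l
      rw [hmem]
      show f (π 0) = σ (fL l)
      simp [hσL l]
    set u0 : ↥L →ₗ[R] ↥X :=
      LinearMap.codRestrict X (LinearMap.prod 0 fL.hom) hL0 with hu0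
    set pr1 : ↥X →ₗ[R] ↥P := LinearMap.fst R ↥P ↥Q ∘ₗ X.subtype with hpr1
    have hval : ∀ x : ↥X, f (π (x : ↥P × ↥Q).1) = σ (x : ↥P × ↥Q).2 :=
      fun x => (hmem _).1 x.2
    have hker3 : LinearMap.range u0 = LinearMap.ker pr1 := by
      ext x
      simp only [LinearMap.mem_range, LinearMap.mem_ker]
      constructor
      · rintro ⟨l, rfl⟩
        rfl
      · intro hx
        have hx1 : (x : ↥P × ↥Q).1 = 0 := hx
        have h1 := hval x
        rw [hx1, map_zero, map_zero] at h1
        have h2 : (x : ↥P × ↥Q).2 ∈ LinearMap.ker σ.hom := by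
          rw [LinearMap.mem_ker]; exact h1.symm
        rw [← hses1.2.2] at h2
        obtain ⟨l, hl⟩ := h2
        exact ⟨l, Subtype.ext (Prod.ext hx1.symm hl)⟩
    have hses3 : IsSES R (show (L ⟶ ModuleCat.of R ↥X) from ModuleCat.ofHom u0)
        (show (ModuleCat.of R ↥X ⟶ P) from ModuleCat.ofHom pr1) := by
      refine ⟨?_, ?_, hker3⟩
      · intro a b hab
        exact hses1.1 (congrArg (fun z : ↥X => (z : ↥P × ↥Q).2) hab)
      · intro p
        obtain ⟨q, hq⟩ := hses1.2.1 (f (π p))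
        exact ⟨⟨(p, q), (hmem _).2 hq.symm⟩, rfl⟩
    have hpdX : HasPdLE R n (ModuleCat.of R ↥X) := hasPdLE_of_ses hL hP (ModuleCat.ofHom u0) (ModuleCat.ofHom pr1) hses3
    -- the map B → X
    have hπB : ∀ b : ↥B, π (ι b) = 0 := by
      intro b
      rw [← LinearMap.mem_ker, ← hses2.2.2]
      exact LinearMap.mem_range_self _ b
    have hB0 : ∀ b : ↥B, ((ι b, (0 : ↥Q)) ∈ X) := by
      intro b
      rw [hmem]
      show f (π (ι b)) = σ 0
      simp [hπB b]
    set j : ↥B →ₗ[R] ↥X :=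
      LinearMap.codRestrict X (LinearMap.prod ι.hom 0) hB0 with hj
    have hjinj : Function.Injective j := fun a b hab =>
      hses2.1 (congrArg (fun z : ↥X => (z : ↥P × ↥Q).1) hab)
    have hsyz1 := IH (ModuleCat.of R ↥X) hXfin hpdX B (ModuleCat.ofHom j) hjinj K hB
    -- E = preimage of f(A) in Q
    set E : Submodule R ↥Q :=
      (LinearMap.range f.hom).comap σ.hom with hE
    have hmemE : ∀ q : ↥Q, q ∈ E ↔ σ q ∈ LinearMap.range f.hom := by
      intro q; rw [hE]; exact Iff.rfl
    set φ : ↥X →ₗ[R] ↥E :=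
      LinearMap.codRestrict E (LinearMap.snd R ↥P ↥Q ∘ₗ X.subtype)
        (fun x => (hmemE _).2 ⟨π (x : ↥P × ↥Q).1, hval x⟩) with hφdef
    have hφ : Function.Surjective φ := by
      rintro ⟨q, hq⟩
      have hq' := (hmemE q).1 hq
      rw [LinearMap.mem_range] at hq'
      obtain ⟨a, ha⟩ := hq'
      obtain ⟨p, hp⟩ := hses2.2.1 a
      exact ⟨⟨(p, q), (hmem _).2 (by rw [hp, ha])⟩, Subtype.ext rfl⟩
    have hkerφ : LinearMap.ker φ = LinearMap.range j := by
      ext x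
      simp only [LinearMap.mem_ker, LinearMap.mem_range]
      constructor
      · intro hx
        have hx2 : (x : ↥P × ↥Q).2 = 0 := congrArg Subtype.val hx
        have h1 := hval x
        rw [hx2, map_zero] at h1
        have h2 : π (x : ↥P × ↥Q).1 = 0 := by
          apply hf
          rw [h1, map_zero]
        have h3 : (x : ↥P × ↥Q).1 ∈ LinearMap.ker π.hom := by
          rw [LinearMap.mem_ker]; exact h2
        rw [← hses2.2.2] at h3
        obtain ⟨b, hb⟩ := h3
        exact ⟨b, Subtype.ext (Prod.ext hb hx2.symm)⟩
      · rintro ⟨b, rfl⟩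
        exact Subtype.ext rfl
    have iso1 : (↥X ⧸ LinearMap.range j) ≃ₗ[R] ↥E :=
      (Submodule.quotEquivOfEq _ _ hkerφ.symm).trans (φ.quotKerEquivOfSurjective hφ)
    have hsyz2 : IsSyzygyOf R (n + 1) (ModuleCat.of R ↥E) K := syz_congr hsyz1 iso1
    have hsesE : IsSES R (show (ModuleCat.of R ↥E ⟶ Q) from ModuleCat.ofHom E.subtype)
        (show (Q ⟶ ModuleCat.of R (↥Q ⧸ E)) from ModuleCat.ofHom E.mkQ) :=
      ⟨Subtype.val_injective, Submodule.mkQ_surjective _,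
        by rw [ModuleCat.hom_ofHom, ModuleCat.hom_ofHom, Submodule.range_subtype, Submodule.ker_mkQ]⟩
    have hsyz3 : IsSyzygyOf R (n + 1 + 1) (ModuleCat.of R (↥Q ⧸ E)) K :=
      syz_extend hQ hsyz2 _ _ hsesE
    set g2 : ↥Q →ₗ[R] (↥W ⧸ LinearMap.range f.hom) :=
      (LinearMap.range f.hom).mkQ ∘ₗ σ.hom with hg2
    have hg2s : Function.Surjective g2 := (Submodule.mkQ_surjective _).comp hses1.2.1
    have hker2 : E = LinearMap.ker g2 := by
      rw [hg2, LinearMap.ker_comp, Submodule.ker_mkQ, hE]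
    have iso2 : (↥Q ⧸ E) ≃ₗ[R] (↥W ⧸ LinearMap.range f.hom) :=
      (Submodule.quotEquivOfEq E _ hker2).trans (g2.quotKerEquivOfSurjective hg2s)
    exact syz_congr hsyz3 iso2

end Aux

/-- If `M` embeds in a finitely generated module of projective dimension at most
`n`, then the `n`-th syzygy of `M` is an `(n+1)`st syzygy. -/
theorem stmt2 (R : Type u) [CommRing R] [IsNoetherianRing R]
    (M : ModuleCat.{u} R) (hM : Module.Finite R M) (n : ℕ)
    (W : ModuleCat.{u} R) (hW : Module.Finite R W) (hpd : HasPdLE R n W)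
    (f : M ⟶ W) (hf : Function.Injective f) :
    ∀ K : ModuleCat.{u} R, IsSyzygyOf R n M K →
      ∃ N : ModuleCat.{u} R, Module.Finite R N ∧ IsSyzygyOf R (n + 1) N K := by
  intro K hK
  haveI := hW
  exact ⟨ModuleCat.of R (↥W ⧸ LinearMap.range f.hom),
    (inferInstance : Module.Finite R (↥W ⧸ LinearMap.range f.hom)),
    main_aux R n W hW hpd M f hf K (syz_to_cosyz hK)⟩

end
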